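/- Let μ be a singular cardinal with cf(μ) = θ. Then 𝔡*_μ = 𝔡_μ, where 𝔡*_μ is the minimal cardinality of a family 𝓖 ⊆ θ^μ (functions from μ to θ) such that every f : μ → θ satisfies f <* g for some g ∈ 𝓖, with f <* g meaning |{β < μ : f(β) ≥ g(β)}| < μ. -/

import Mathlib

open Cardinal

/-- `f ≤* g` in `μ^μ`: the set of counterexamples to domination has size `< μ`.
Here `μ` is represented by its canonical well-ordered type `μ.ord.ToType`. -/
def AlmostLE (μ : Cardinal) (f g : μ.ord.ToType → μ.ord.ToType) : Prop :=
  #↥{β : μ.ord.ToType | g β < f β} < μ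

/-- The dominating number `𝔡_μ`: the minimal size of a family `D ⊆ μ^μ` such that
every `f ∈ μ^μ` is `≤*`-dominated by a member of `D`. -/
noncomputable def dNumber (μ : Cardinal) : Cardinal :=
  sInf {c : Cardinal | ∃ D : Set (μ.ord.ToType → μ.ord.ToType),
    (∀ f : μ.ord.ToType → μ.ord.ToType, ∃ g ∈ D, AlmostLE μ f g) ∧ #↥D = c}

/-- `f <* g` for `f, g : μ → θ`: all but fewer than `μ` many `β < μ` satisfy
`f(β) < g(β)`. -/
def AlmostLT (μ θ : Cardinal) (f g : μ.ord.ToType → θ.ord.ToType) : Prop :=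
  #↥{β : μ.ord.ToType | g β ≤ f β} < μ

/-- `𝔡*_μ`: the minimal cardinality of a family `G` of functions from `μ` to `θ`
(`θ = cf(μ)`) such that every `f : μ → θ` satisfies `f <* g` for some `g ∈ G`. -/
noncomputable def dStarNumber (μ θ : Cardinal) : Cardinal :=
  sInf {c : Cardinal | ∃ G : Set (μ.ord.ToType → θ.ord.ToType),
    (∀ f : μ.ord.ToType → θ.ord.ToType, ∃ g ∈ G, AlmostLT μ θ f g) ∧ #↥G = c}

private lemma exists_scale (μ : Cardinal) (hinf : ℵ₀ ≤ μ) :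
    ∃ E : μ.ord.cof.ord.ToType → μ.ord.ToType,
      StrictMono E ∧ ∀ z, ∃ i, z < E i := by
  obtain ⟨f, hf⟩ := Ordinal.exists_fundamental_sequence μ.ord
  have hcof : ℵ₀ ≤ μ.ord.cof := Ordinal.aleph0_le_cof.2 (Cardinal.isSuccLimit_ord hinf)
  haveI : NoMaxOrder μ.ord.cof.ord.ToType := Cardinal.noMaxOrder hcof
  set e₁ := Ordinal.ToType.mk (o := μ.ord.cof.ord) with he₁
  set e₂ := Ordinal.ToType.mk (o := μ.ord) with he₂
  have hflt : ∀ (b) (hb : b < μ.ord.cof.ord), f b hb < μ.ord := by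
    intro b hb
    have := Ordinal.lt_blsub f b hb
    rwa [hf.blsub_eq] at this
  set E : μ.ord.cof.ord.ToType → μ.ord.ToType :=
    fun x => e₂ ⟨f (e₁.symm x).1 (e₁.symm x).2, hflt _ _⟩ with hE
  have hmono : StrictMono E := by
    intro x y hxy
    have h1 : (e₁.symm x : Ordinal) < (e₁.symm y : Ordinal) := e₁.symm.strictMono hxy
    exact e₂.strictMono (Subtype.mk_lt_mk.2 (hf.strict_mono _ _ h1))
  refine ⟨E, hmono, fun z => ?_⟩
  have hz : (e₂.symm z : Ordinal) < Ordinal.blsub _ f := by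
    rw [hf.blsub_eq]; exact (e₂.symm z).2
  obtain ⟨i, hi, hle⟩ := Ordinal.lt_blsub_iff.1 hz
  obtain ⟨j, hj⟩ := exists_gt (e₁ ⟨i, hi⟩)
  refine ⟨j, lt_of_le_of_lt ?_ (hmono hj)⟩
  have key : E (e₁ ⟨i, hi⟩) = e₂ ⟨f i hi, hflt _ _⟩ := by
    simp [hE]
  rw [key]
  have : e₂.symm z ≤ (⟨f i hi, hflt _ _⟩ : Set.Iio μ.ord) := hle
  simpa using e₂.le_iff_le.2 this

/-- For a singular cardinal `μ` with `cf(μ) = θ`, `𝔡*_μ = 𝔡_μ`. -/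
theorem stmt13 (μ θ : Cardinal) (hinf : ℵ₀ ≤ μ) (hsing : μ.ord.cof < μ)
    (hθ : θ = μ.ord.cof) :
    dStarNumber μ θ = dNumber μ := by
  subst hθ
  obtain ⟨E, hmonoE, hcofE⟩ := exists_scale μ hinf
  have hwf : WellFounded ((· < ·) : μ.ord.cof.ord.ToType → _ → Prop) := wellFounded_lt
  have hμpos : (0 : Cardinal) < μ := lt_of_lt_of_le aleph0_pos hinf
  haveI : NoMaxOrder μ.ord.cof.ord.ToType :=
    Cardinal.noMaxOrder (Ordinal.aleph0_le_cof.2 (Cardinal.isSuccLimit_ord hinf))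
  set least : μ.ord.ToType → μ.ord.cof.ord.ToType :=
    fun x => hwf.min {i | x < E i} (hcofE x) with hleastdef
  have hleast_lt : ∀ x, x < E (least x) := fun x => hwf.min_mem {i | x < E i} (hcofE x)
  have hleast_min : ∀ x i, x < E i → least x ≤ i := by
    intro x i h
    exact not_lt.1 (hwf.not_lt_min {i | x < E i} h)
  set S : Set Cardinal := {c : Cardinal | ∃ D : Set (μ.ord.ToType → μ.ord.ToType),
    (∀ f : μ.ord.ToType → μ.ord.ToType, ∃ g ∈ D, AlmostLE μ f g) ∧ #↥D = c} with hS
  set T : Set Cardinal := {c : Cardinal |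
      ∃ G : Set (μ.ord.ToType → μ.ord.cof.ord.ToType),
    (∀ f : μ.ord.ToType → μ.ord.cof.ord.ToType, ∃ g ∈ G, AlmostLT μ μ.ord.cof f g) ∧
      #↥G = c} with hT
  have hSne : S.Nonempty := by
    refine ⟨_, Set.univ, fun f => ⟨f, Set.mem_univ f, ?_⟩, rfl⟩
    have he : {β : μ.ord.ToType | f β < f β} = ∅ := by simp
    rw [AlmostLE, he, Cardinal.mk_emptyCollection]
    exact hμpos
  have hTne : T.Nonempty := by
    refine ⟨_, Set.univ, fun f => ?_, rfl⟩
    refine ⟨fun β => (exists_gt (f β)).choose, Set.mem_univ _, ?_⟩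
    have he : {β : μ.ord.ToType | (exists_gt (f β)).choose ≤ f β} = ∅ := by
      ext β; simp [not_le.2 (exists_gt (f β)).choose_spec]
    rw [AlmostLT, he, Cardinal.mk_emptyCollection]
    exact hμpos
  have hbdd : ∀ s : Set Cardinal, BddBelow s := fun s => ⟨0, fun x _ => zero_le⟩
  apply le_antisymm
  · -- dStar ≤ d
    obtain ⟨D, hDdom, hDcard⟩ := csInf_mem hSne
    set star : (μ.ord.ToType → μ.ord.ToType) → (μ.ord.ToType → μ.ord.cof.ord.ToType) :=
      fun g β => least (g β) with hstar
    have hmem : #↥(star '' D) ∈ T := by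
      refine ⟨star '' D, fun f => ?_, rfl⟩
      obtain ⟨g, hgD, hgle⟩ := hDdom (fun β => E (f β))
      refine ⟨star g, Set.mem_image_of_mem _ hgD, ?_⟩
      have hsub : {β | star g β ≤ f β} ⊆ {β : μ.ord.ToType | g β < E (f β)} := by
        intro β hβ
        exact lt_of_lt_of_le (hleast_lt (g β)) (hmonoE.monotone hβ)
      exact lt_of_le_of_lt (Cardinal.mk_le_mk_of_subset hsub) hgle
    calc dStarNumber μ μ.ord.cof ≤ #↥(star '' D) := csInf_le (hbdd _) hmem
      _ ≤ #↥D := Cardinal.mk_image_le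
      _ = dNumber μ := hDcard
  · -- d ≤ dStar
    obtain ⟨G, hGdom, hGcard⟩ := csInf_mem hTne
    set lift : (μ.ord.ToType → μ.ord.cof.ord.ToType) → (μ.ord.ToType → μ.ord.ToType) :=
      fun h β => E (h β) with hlift
    have hmem : #↥(lift '' G) ∈ S := by
      refine ⟨lift '' G, fun f => ?_, rfl⟩
      obtain ⟨h, hhG, hhlt⟩ := hGdom (fun β => least (f β))
      refine ⟨lift h, Set.mem_image_of_mem _ hhG, ?_⟩
      have hsub : {β | lift h β < f β} ⊆ {β : μ.ord.ToType | h β ≤ least (f β)} := by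
        intro β hβ
        by_contra hc
        have h1 : f β < E (h β) := lt_trans (hleast_lt (f β)) (hmonoE (not_le.1 hc))
        exact absurd hβ (not_lt.2 h1.le)
      exact lt_of_le_of_lt (Cardinal.mk_le_mk_of_subset hsub) hhlt
    calc dNumber μ ≤ #↥(lift '' G) := csInf_le (hbdd _) hmem
      _ ≤ #↥G := Cardinal.mk_image_le
      _ = dStarNumber μ μ.ord.cof := hGcard
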